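/- For any collection of nonnegative reals d_1, d_2, ..., d_{n+1} summing to 1 with n = 2m+1, there exists an index j in {1,...,m+1} such that either (d_j ≥ 2^{j-1}·α and d_l < 2^{l-1}·α for all l < j) or (d_{n+2-j} ≥ 2^{j-1}·α and d_{n+2-l} < 2^{l-1}·α for all l < j), where α = 1/(2·2^{m+1} - 2). -/

import Mathlib

theorem exists_good_index (m : ℕ) (d : ℕ → ℝ)
    (hnonneg : ∀ i, 1 ≤ i → i ≤ 2 * m + 2 → 0 ≤ d i)
    (hsum : ∑ i ∈ Finset.Icc 1 (2 * m + 2), d i = 1) :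
    ∃ j, 1 ≤ j ∧ j ≤ m + 1 ∧
      ((d j ≥ 2 ^ (j - 1) * (1 / (2 * 2 ^ (m + 1) - 2)) ∧
        ∀ l, 1 ≤ l → l < j → d l < 2 ^ (l - 1) * (1 / (2 * 2 ^ (m + 1) - 2))) ∨
       (d (2 * m + 3 - j) ≥ 2 ^ (j - 1) * (1 / (2 * 2 ^ (m + 1) - 2)) ∧
        ∀ l, 1 ≤ l → l < j → d (2 * m + 3 - l) < 2 ^ (l - 1) * (1 / (2 * 2 ^ (m + 1) - 2)))) := by
  classical
  set α : ℝ := 1 / (2 * 2 ^ (m + 1) - 2) with hα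
  by_cases h : ∃ j, (1 ≤ j ∧ j ≤ m + 1) ∧ (d j ≥ 2 ^ (j - 1) * α ∨ d (2 * m + 3 - j) ≥ 2 ^ (j - 1) * α)
  · obtain ⟨⟨hj1, hj2⟩, hor⟩ := Nat.find_spec h
    have hsmall : ∀ l, 1 ≤ l → l < Nat.find h →
        d l < 2 ^ (l - 1) * α ∧ d (2 * m + 3 - l) < 2 ^ (l - 1) * α := by
      intro l hl1 hl2
      have := Nat.find_min h hl2
      push_neg at this
      have hlm : l ≤ m + 1 := le_trans (Nat.le_of_lt hl2) hj2
      obtain ⟨h1, h2⟩ := this ⟨hl1, hlm⟩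
      exact ⟨h1, h2⟩
    refine ⟨Nat.find h, hj1, hj2, ?_⟩
    rcases hor with h1 | h1
    · exact Or.inl ⟨h1, fun l a b => (hsmall l a b).1⟩
    · exact Or.inr ⟨h1, fun l a b => (hsmall l a b).2⟩
  · exfalso
    push_neg at h
    have hsmall : ∀ j, 1 ≤ j → j ≤ m + 1 →
        d j < 2 ^ (j - 1) * α ∧ d (2 * m + 3 - j) < 2 ^ (j - 1) * α := by
      intro j h1 h2
      exact h j ⟨h1, h2⟩
    -- rearrange sum
    have hsplit : ∑ i ∈ Finset.Icc 1 (2 * m + 2), d i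
        = ∑ j ∈ Finset.Icc 1 (m + 1), (d j + d (2 * m + 3 - j)) := by
      rw [Finset.sum_add_distrib]
      have h1 : Finset.Icc 1 (2 * m + 2) = Finset.Ioc 0 (2 * m + 2) := by
        ext x; simp [Nat.lt_iff_add_one_le]
      have h2 : Finset.Icc 1 (m + 1) = Finset.Ioc 0 (m + 1) := by
        ext x; simp [Nat.lt_iff_add_one_le]
      rw [h1, h2, ← Finset.sum_Ioc_consecutive d (by omega : 0 ≤ m + 1) (by omega : m + 1 ≤ 2 * m + 2)]
      congr 1
      apply Finset.sum_nbij' (fun j => 2 * m + 3 - j) (fun i => 2 * m + 3 - i)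
      · intro a ha; simp at ha ⊢; omega
      · intro a ha; simp at ha ⊢; omega
      · intro a ha; simp at ha; omega
      · intro a ha; simp at ha; omega
      · intro a ha; simp at ha; congr 1; omega
    have hαpos : 0 < α := by
      rw [hα]
      apply div_pos one_pos
      have : (2:ℝ) ≤ 2 ^ (m + 1) := by
        calc (2:ℝ) = 2 ^ 1 := by norm_num
        _ ≤ 2 ^ (m + 1) := by apply pow_le_pow_right₀ <;> norm_num
      linarith
    have hlt : ∑ j ∈ Finset.Icc 1 (m + 1), (d j + d (2 * m + 3 - j))
        < ∑ j ∈ Finset.Icc 1 (m + 1), 2 * (2 ^ (j - 1) * α) := by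
      apply Finset.sum_lt_sum_of_nonempty
      · exact ⟨1, by simp⟩
      · intro j hj
        simp only [Finset.mem_Icc] at hj
        obtain ⟨a, b⟩ := hsmall j hj.1 hj.2
        linarith
    have hgeom : ∑ j ∈ Finset.Icc 1 (m + 1), (2:ℝ) * (2 ^ (j - 1) * α) = 1 := by
      have : ∑ j ∈ Finset.Icc 1 (m + 1), (2:ℝ) ^ (j - 1)
          = ∑ k ∈ Finset.range (m + 1), (2:ℝ) ^ k := by
        apply Finset.sum_nbij' (fun j => j - 1) (fun k => k + 1)
        · intro a ha; simp at ha ⊢; omega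
        · intro a ha; simp at ha ⊢; omega
        · intro a ha; simp at ha; omega
        · intro a ha; simp
        · intro a ha; rfl
      have hg : ∑ k ∈ Finset.range (m + 1), (2:ℝ) ^ k = 2 ^ (m + 1) - 1 := by
        rw [geom_sum_eq (by norm_num)]
        ring
      have hne : (2:ℝ) * 2 ^ (m + 1) - 2 ≠ 0 := by
        have : (2:ℝ) ≤ 2 ^ (m + 1) := by
          calc (2:ℝ) = 2 ^ 1 := by norm_num
          _ ≤ 2 ^ (m + 1) := by apply pow_le_pow_right₀ <;> norm_num
        intro hc; linarith [hc]
      calc ∑ j ∈ Finset.Icc 1 (m + 1), (2:ℝ) * (2 ^ (j - 1) * α)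
          = 2 * α * ∑ j ∈ Finset.Icc 1 (m + 1), (2:ℝ) ^ (j - 1) := by
            rw [Finset.mul_sum]; apply Finset.sum_congr rfl; intros; ring
        _ = 2 * α * (2 ^ (m + 1) - 1) := by rw [this, hg]
        _ = 1 := by
            rw [hα, show (2:ℝ) * (1 / (2 * 2 ^ (m + 1) - 2)) * (2 ^ (m + 1) - 1) = (2 * 2 ^ (m + 1) - 2) / (2 * 2 ^ (m + 1) - 2) by ring, div_self hne]
    rw [hsplit] at hsum
    rw [hgeom] at hlt
    linarith
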